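/- Let 0 < r̂₁ < r̂₂ and κ > 0, and define Ξ on (r̂₁, r̂₂) as in the context. Then Ξ(r) → −∞ as r → r̂₁ from the right, and Ξ(r) → +∞ as r → r̂₂ from the left. -/

import Mathlib

open Real intervalIntegral Set Filter Topology

noncomputable def vD (a r σ : ℝ) : ℝ := (r - a) ^ 2 + 4 * r * a * Real.sin σ ^ 2

noncomputable def vF (a r σ : ℝ) : ℝ :=
  a * (a - r * Real.cos (2 * σ)) / (vD a r σ) ^ ((3:ℝ)/2)

lemma vD_pos {a r : ℝ} (ha : 0 < a) (hr : 0 < r) (hne : r ≠ a) (σ : ℝ) : 0 < vD a r σ := by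
  have h : r - a ≠ 0 := sub_ne_zero.mpr hne
  have h1 : 0 < (r - a) ^ 2 := by positivity
  have h2 : 0 ≤ 4 * r * a * Real.sin σ ^ 2 := by positivity
  unfold vD; linarith

lemma vD_cont (a r : ℝ) : Continuous (vD a r) := by unfold vD; fun_prop

lemma vF_cont {a r : ℝ} (ha : 0 < a) (hr : 0 < r) (hne : r ≠ a) : Continuous (vF a r) := by
  unfold vF
  apply Continuous.div (by fun_prop)
  · exact (vD_cont a r).rpow_const (fun σ => Or.inr (by norm_num))
  · exact fun σ => (Real.rpow_pos_of_pos (vD_pos ha hr hne σ) _).ne'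

lemma num_eq (a r σ : ℝ) :
    a * (a - r * Real.cos (2 * σ)) = -(a * (r - a)) + 2 * a * r * Real.sin σ ^ 2 := by
  rw [Real.cos_two_mul']
  linear_combination (-(a * r)) * Real.sin_sq_add_cos_sq σ

lemma sq_rpow (x : ℝ) (hx : 0 ≤ x) (p : ℝ) : (x ^ 2) ^ p = x ^ (2 * p) := by
  rw [← Real.rpow_natCast x 2, ← Real.rpow_mul hx]
  norm_num

lemma sq_rpow_three_halves {x : ℝ} (hx : 0 ≤ x) : (x ^ 2) ^ ((3:ℝ)/2) = x ^ 3 := by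
  rw [sq_rpow x hx, show (2 * ((3:ℝ)/2)) = ((3:ℕ):ℝ) by norm_num, Real.rpow_natCast]

lemma sq_rpow_half {x : ℝ} (hx : 0 ≤ x) : (x ^ 2) ^ ((1:ℝ)/2) = x := by
  rw [sq_rpow x hx, show (2 * ((1:ℝ)/2)) = (1:ℝ) by norm_num, Real.rpow_one]

lemma vF_abs_le {c R d r : ℝ} (σ : ℝ) (hc : 0 < c) (hr0 : 0 < r) (hrR : r ≤ R) (hd : 0 < d)
    (hdist : d ^ 2 ≤ (r - c) ^ 2) : |vF c r σ| ≤ c * (c + R) / d ^ 3 := by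
  have hR0 : 0 < R := lt_of_lt_of_le hr0 hrR
  have hs : 0 ≤ 4 * r * c * Real.sin σ ^ 2 := by positivity
  have hD : d ^ 2 ≤ vD c r σ := by unfold vD; linarith
  have hDpos : 0 < vD c r σ := lt_of_lt_of_le (by positivity) hD
  have h3 : d ^ 3 ≤ vD c r σ ^ ((3:ℝ)/2) := by
    calc d ^ 3 = (d ^ 2) ^ ((3:ℝ)/2) := (sq_rpow_three_halves hd.le).symm
    _ ≤ _ := Real.rpow_le_rpow (by positivity) hD (by norm_num)
  have hcos1 : Real.cos (2 * σ) ≤ 1 := Real.cos_le_one _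
  have hcos2 : -1 ≤ Real.cos (2 * σ) := Real.neg_one_le_cos _
  have hnum : |c * (c - r * Real.cos (2 * σ))| ≤ c * (c + R) := by
    have hcr : (0:ℝ) ≤ c * r := by positivity
    have hh1 : c * r * Real.cos (2 * σ) ≤ c * r * 1 :=
      mul_le_mul_of_nonneg_left hcos1 hcr
    have hh2 : c * r * (-1) ≤ c * r * Real.cos (2 * σ) :=
      mul_le_mul_of_nonneg_left hcos2 hcr
    have hh3 : c * r ≤ c * R := by nlinarith
    rw [abs_le]; constructor <;> nlinarith
  rw [vF, abs_div, abs_of_pos (Real.rpow_pos_of_pos hDpos _)]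
  have hd3 : (0:ℝ) < d ^ 3 := by positivity
  have hnn : (0:ℝ) ≤ c * (c + R) := by positivity
  exact div_le_div₀ hnn hnum hd3 h3

set_option maxHeartbeats 1000000 in
/-- Upper bound for the integral of the singular ring near `a` from the right. -/
lemma ring_upper {a R r : ℝ} (ha : 0 < a) (hr1 : a < r) (hrR : r ≤ R) (hε1 : r - a < 1) :
    ∫ σ in (0:ℝ)..(π/2), vF a r σ ≤
      -(a / ((1 + 4 * R * a) ^ ((3:ℝ)/2))) / (r - a)
        + (1/2 + π ^ 2 / (16 * a)) / Real.sqrt (r - a) := by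
  have hπ := Real.pi_gt_three
  set ε := r - a with hεdef
  have hε0 : 0 < ε := by simp [hεdef]; linarith
  have hεπ : ε ≤ π / 2 := by linarith
  set s := Real.sqrt ε with hsdef
  have hs0 : 0 < s := Real.sqrt_pos.mpr hε0
  have hs2 : s ^ 2 = ε := Real.sq_sqrt hε0.le
  have hs1 : s < 1 := by nlinarith
  have hsπ : s ≤ π / 2 := by linarith
  have hne : r ≠ a := ne_of_gt hr1
  have hr0 : 0 < r := lt_trans ha hr1
  have hR0 : 0 < R := lt_of_lt_of_le hr0 hrR
  have hDpos : ∀ σ, 0 < vD a r σ := vD_pos ha hr0 hne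
  have hD32 : ∀ σ, 0 < vD a r σ ^ ((3:ℝ)/2) := fun σ => Real.rpow_pos_of_pos (hDpos σ) _
  have hD12 : ∀ σ, 0 < vD a r σ ^ ((1:ℝ)/2) := fun σ => Real.rpow_pos_of_pos (hDpos σ) _
  set K : ℝ := (1 + 4 * R * a) ^ ((3:ℝ)/2) with hKdef
  have hK0 : 0 < K := Real.rpow_pos_of_pos (by positivity) _
  set N : ℝ → ℝ := fun σ => -(a * ε) / vD a r σ ^ ((3:ℝ)/2) with hNdef
  set P : ℝ → ℝ := fun σ => 1 / (2 * vD a r σ ^ ((1:ℝ)/2)) with hPdef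
  have hNcont : Continuous N := by
    apply Continuous.div continuous_const
    · exact (vD_cont a r).rpow_const (fun σ => Or.inr (by norm_num))
    · exact fun σ => (hD32 σ).ne'
  have hPcont : Continuous P := by
    apply Continuous.div continuous_const
    · exact (continuous_const.mul ((vD_cont a r).rpow_const (fun σ => Or.inr (by norm_num))))
    · exact fun σ => (mul_pos two_pos (hD12 σ)).ne'
  have hFcont := vF_cont ha hr0 hne
  -- pointwise bound vF ≤ N + P
  have hpt : ∀ σ, vF a r σ ≤ N σ + P σ := by
    intro σ
    have hD : vD a r σ ^ ((3:ℝ)/2) = vD a r σ * vD a r σ ^ ((1:ℝ)/2) := by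
      rw [show ((3:ℝ)/2) = 1 + 1/2 by norm_num, Real.rpow_add (hDpos σ), Real.rpow_one]
    have h1 : vF a r σ = N σ + (2 * a * r * Real.sin σ ^ 2) / vD a r σ ^ ((3:ℝ)/2) := by
      rw [vF, num_eq, add_div, hNdef]
    rw [h1]
    have h2 : (2 * a * r * Real.sin σ ^ 2) / vD a r σ ^ ((3:ℝ)/2) ≤ P σ := by
      rw [hPdef, div_le_div_iff₀ (hD32 σ) (mul_pos two_pos (hD12 σ)), hD]
      have h4 : 4 * a * r * Real.sin σ ^ 2 ≤ vD a r σ := by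
        unfold vD; nlinarith [sq_nonneg (r - a)]
      nlinarith [hD12 σ, mul_le_mul_of_nonneg_right h4 (hD12 σ).le]
    linarith
  have hNi : ∀ x y : ℝ, IntervalIntegrable N MeasureTheory.volume x y :=
    fun x y => hNcont.intervalIntegrable x y
  have hPi : ∀ x y : ℝ, IntervalIntegrable P MeasureTheory.volume x y :=
    fun x y => hPcont.intervalIntegrable x y
  have step1 : ∫ σ in (0:ℝ)..(π/2), vF a r σ ≤ ∫ σ in (0:ℝ)..(π/2), (N σ + P σ) := by
    apply integral_mono_on (by linarith) (hFcont.intervalIntegrable _ _)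
      ((hNi 0 (π/2)).add (hPi 0 (π/2)))
    exact fun σ _ => hpt σ
  have step2 : ∫ σ in (0:ℝ)..(π/2), (N σ + P σ)
      = (∫ σ in (0:ℝ)..(π/2), N σ) + ∫ σ in (0:ℝ)..(π/2), P σ :=
    integral_add (hNi 0 (π/2)) (hPi 0 (π/2))
  -- N part
  have hN1 : ∫ σ in (0:ℝ)..ε, N σ ≤ -(a / (K * ε)) := by
    have hconst : ∫ σ in (0:ℝ)..ε, (-(a / (K * ε ^ 2))) = -(a / (K * ε)) := by
      rw [integral_const, smul_eq_mul]
      field_simp; ring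
    rw [← hconst]
    apply integral_mono_on hε0.le (hNi 0 ε) (intervalIntegrable_const)
    intro σ hσ
    have hσ0 : 0 ≤ σ := hσ.1
    have hσε : σ ≤ ε := hσ.2
    have hsin : Real.sin σ ≤ σ := Real.sin_le hσ0
    have hsinn : 0 ≤ Real.sin σ := Real.sin_nonneg_of_nonneg_of_le_pi hσ0 (by linarith)
    have hDle : vD a r σ ≤ (1 + 4 * R * a) * ε ^ 2 := by
      unfold vD
      have h1 : Real.sin σ ^ 2 ≤ ε ^ 2 := by nlinarith
      have h2 : (r - a) ^ 2 = ε ^ 2 := by rw [hεdef]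
      nlinarith [mul_le_mul (show 4 * r * a ≤ 4 * R * a by nlinarith) h1
        (sq_nonneg (Real.sin σ)) (show (0:ℝ) ≤ 4 * R * a by positivity)]
    have hD32le : vD a r σ ^ ((3:ℝ)/2) ≤ K * ε ^ 3 := by
      calc vD a r σ ^ ((3:ℝ)/2) ≤ ((1 + 4 * R * a) * ε ^ 2) ^ ((3:ℝ)/2) :=
            Real.rpow_le_rpow (hDpos σ).le hDle (by norm_num)
        _ = K * ε ^ 3 := by
            rw [Real.mul_rpow (by positivity) (by positivity), sq_rpow_three_halves hε0.le]
    have h5 : a * ε / (K * ε ^ 3) ≤ a * ε / vD a r σ ^ ((3:ℝ)/2) := by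
      refine div_le_div_of_nonneg_left ?_ (hD32 σ) hD32le
      positivity
    have heq : a * ε / (K * ε ^ 3) = a / (K * ε ^ 2) := by
      field_simp
    have : a / (K * ε ^ 2) ≤ a * ε / vD a r σ ^ ((3:ℝ)/2) := by rw [← heq]; exact h5
    simp only [hNdef, neg_div]
    linarith
  have hN2 : ∫ σ in ε..(π/2), N σ ≤ 0 := by
    have : ∫ σ in ε..(π/2), (0:ℝ) = 0 := integral_zero
    rw [← this]
    apply integral_mono_on hεπ (hNi ε (π/2)) intervalIntegrable_const
    intro σ _
    simp only [hNdef, neg_div]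
    have : 0 ≤ a * ε / vD a r σ ^ ((3:ℝ)/2) := div_nonneg (by positivity) (hD32 σ).le
    linarith
  have hNsplit : ∫ σ in (0:ℝ)..(π/2), N σ ≤ -(a / (K * ε)) := by
    have := integral_add_adjacent_intervals (hNi 0 ε) (hNi ε (π/2))
    rw [← this]; linarith
  -- P part
  have hP1 : ∫ σ in (0:ℝ)..s, P σ ≤ 1 / (2 * s) := by
    have hconst : ∫ σ in (0:ℝ)..s, (1 / (2 * ε)) = s * (1 / (2 * ε)) := by
      rw [integral_const, smul_eq_mul]; ring
    have heq : s * (1 / (2 * ε)) = 1 / (2 * s) := by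
      rw [← hs2]; field_simp
    rw [← heq, ← hconst]
    apply integral_mono_on hs0.le (hPi 0 s) intervalIntegrable_const
    intro σ _
    have hDge : ε ^ 2 ≤ vD a r σ := by
      unfold vD
      have : (r - a) ^ 2 = ε ^ 2 := by rw [hεdef]
      nlinarith [sq_nonneg (Real.sin σ), mul_pos hr0 ha,
        mul_nonneg (mul_nonneg (by linarith : (0:ℝ) ≤ 4 * r) ha.le) (sq_nonneg (Real.sin σ))]
    have h12 : ε ≤ vD a r σ ^ ((1:ℝ)/2) := by
      calc ε = (ε ^ 2) ^ ((1:ℝ)/2) := (sq_rpow_half hε0.le).symm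
        _ ≤ _ := Real.rpow_le_rpow (by positivity) hDge (by norm_num)
    simp only [hPdef]
    apply one_div_le_one_div_of_le (by positivity)
    linarith
  have hP2 : ∫ σ in s..(π/2), P σ ≤ π ^ 2 / (16 * a * s) := by
    have hconst : ∫ σ in s..(π/2), (π / (8 * a * s)) = (π/2 - s) * (π / (8 * a * s)) := by
      rw [integral_const, smul_eq_mul]
    have hle : (π/2 - s) * (π / (8 * a * s)) ≤ π ^ 2 / (16 * a * s) := by
      have h1 : π/2 - s ≤ π/2 := by linarith
      have h2 : (0:ℝ) ≤ π / (8 * a * s) := by positivity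
      calc (π/2 - s) * (π / (8 * a * s)) ≤ (π/2) * (π / (8 * a * s)) :=
            mul_le_mul_of_nonneg_right h1 h2
        _ = π ^ 2 / (16 * a * s) := by field_simp; ring
    calc ∫ σ in s..(π/2), P σ ≤ ∫ σ in s..(π/2), (π / (8 * a * s)) := by
          apply integral_mono_on hsπ (hPi s (π/2)) intervalIntegrable_const
          intro σ hσ
          have hσs : s ≤ σ := hσ.1
          have hσπ : σ ≤ π/2 := hσ.2
          have hσ0 : 0 ≤ σ := le_trans hs0.le hσs
          have hsin : 2 / π * σ ≤ Real.sin σ := Real.mul_le_sin hσ0 hσπ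
          have hsin2 : 2 * s / π ≤ Real.sin σ := by
            have : 2 / π * s ≤ 2 / π * σ := by
              apply mul_le_mul_of_nonneg_left hσs (by positivity)
            calc 2 * s / π = 2 / π * s := by ring
              _ ≤ _ := le_trans this hsin
          have hsinn : 0 ≤ Real.sin σ := le_trans (by positivity) hsin2
          have hDge : (4 * a * s / π) ^ 2 ≤ vD a r σ := by
            unfold vD
            have h1 : (2 * s / π) ^ 2 ≤ Real.sin σ ^ 2 :=
              pow_le_pow_left₀ (by positivity) hsin2 2
            have h2 : 4 * a * a * (2 * s / π) ^ 2 ≤ 4 * r * a * Real.sin σ ^ 2 := by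
              have h4 : 4 * a * a ≤ 4 * r * a := by nlinarith
              exact mul_le_mul h4 h1 (by positivity) (by positivity)
            have h3 : (4 * a * s / π) ^ 2 = 4 * a * a * (2 * s / π) ^ 2 := by ring
            nlinarith [sq_nonneg (r - a)]
          have h12 : 4 * a * s / π ≤ vD a r σ ^ ((1:ℝ)/2) := by
            calc 4 * a * s / π = ((4 * a * s / π) ^ 2) ^ ((1:ℝ)/2) :=
                  (sq_rpow_half (by positivity)).symm
              _ ≤ _ := Real.rpow_le_rpow (by positivity) hDge (by norm_num)
          simp only [hPdef]
          have hfrac : 1 / (2 * vD a r σ ^ ((1:ℝ)/2)) ≤ 1 / (2 * (4 * a * s / π)) := by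
            apply one_div_le_one_div_of_le (by positivity)
            linarith
          have heqq : (1:ℝ) / (2 * (4 * a * s / π)) = π / (8 * a * s) := by
            rw [show 2 * (4 * a * s / π) = 8 * a * s / π by ring, one_div_div]
          linarith [heqq ▸ hfrac]
      _ ≤ π ^ 2 / (16 * a * s) := by rw [hconst]; exact hle
  have hPsplit : ∫ σ in (0:ℝ)..(π/2), P σ ≤ 1 / (2 * s) + π ^ 2 / (16 * a * s) := by
    have := integral_add_adjacent_intervals (hPi 0 s) (hPi s (π/2))
    rw [← this]; linarith
  have hfinal : -(a / (K * ε)) + (1 / (2 * s) + π ^ 2 / (16 * a * s))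
      = -(a / K) / ε + (1/2 + π ^ 2 / (16 * a)) / s := by
    field_simp
  calc ∫ σ in (0:ℝ)..(π/2), vF a r σ ≤ _ := step1
    _ = _ := step2
    _ ≤ -(a / (K * ε)) + (1 / (2 * s) + π ^ 2 / (16 * a * s)) := by linarith
    _ = -(a / K) / ε + (1/2 + π ^ 2 / (16 * a)) / s := hfinal

/-- Lower bound for the integral of the singular ring near `b` from the left. -/
lemma ring_lower {b r : ℝ} (hb : 0 < b) (hr0 : 0 < r) (hrb : r < b) (hε1 : b - r < 1) :
    (b / ((1 + 4 * b ^ 2) ^ ((3:ℝ)/2))) / (b - r) ≤ ∫ σ in (0:ℝ)..(π/2), vF b r σ := by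
  have hπ := Real.pi_gt_three
  set ε := b - r with hεdef
  have hε0 : 0 < ε := by simp [hεdef]; linarith
  have hεπ : ε ≤ π / 2 := by linarith
  have hne : r ≠ b := ne_of_lt hrb
  have hDpos : ∀ σ, 0 < vD b r σ := vD_pos hb hr0 hne
  have hD32 : ∀ σ, 0 < vD b r σ ^ ((3:ℝ)/2) := fun σ => Real.rpow_pos_of_pos (hDpos σ) _
  set K : ℝ := (1 + 4 * b ^ 2) ^ ((3:ℝ)/2) with hKdef
  have hK0 : 0 < K := Real.rpow_pos_of_pos (by positivity) _
  have hFcont := vF_cont hb hr0 hne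
  have hFi : ∀ x y : ℝ, IntervalIntegrable (vF b r) MeasureTheory.volume x y :=
    fun x y => hFcont.intervalIntegrable x y
  have hvFeq : ∀ σ, vF b r σ = (b * ε + 2 * b * r * Real.sin σ ^ 2) / vD b r σ ^ ((3:ℝ)/2) := by
    intro σ
    rw [vF, num_eq, show -(b * (r - b)) + 2 * b * r * Real.sin σ ^ 2
      = b * ε + 2 * b * r * Real.sin σ ^ 2 by rw [hεdef]; ring]
  have hFpt : ∀ σ, b * ε / vD b r σ ^ ((3:ℝ)/2) ≤ vF b r σ := by
    intro σ
    rw [hvFeq σ]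
    rw [div_le_div_iff_of_pos_right (hD32 σ)]
    nlinarith [sq_nonneg (Real.sin σ), mul_pos hb hr0]
  have hFpt0 : ∀ σ, 0 ≤ vF b r σ := by
    intro σ
    refine le_trans ?_ (hFpt σ)
    exact div_nonneg (by positivity) (hD32 σ).le
  have h1 : b / (K * ε) ≤ ∫ σ in (0:ℝ)..ε, vF b r σ := by
    have hconst : ∫ σ in (0:ℝ)..ε, (b / (K * ε ^ 2)) = b / (K * ε) := by
      rw [integral_const, smul_eq_mul]
      field_simp; ring
    rw [← hconst]
    apply integral_mono_on hε0.le intervalIntegrable_const (hFi 0 ε)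
    intro σ hσ
    have hσ0 : 0 ≤ σ := hσ.1
    have hσε : σ ≤ ε := hσ.2
    have hsin : Real.sin σ ≤ σ := Real.sin_le hσ0
    have hsinn : 0 ≤ Real.sin σ := Real.sin_nonneg_of_nonneg_of_le_pi hσ0 (by linarith)
    have hDle : vD b r σ ≤ (1 + 4 * b ^ 2) * ε ^ 2 := by
      unfold vD
      have hx1 : Real.sin σ ^ 2 ≤ ε ^ 2 := by nlinarith
      have hx2 : (r - b) ^ 2 = ε ^ 2 := by rw [hεdef]; ring
      nlinarith [mul_le_mul (show 4 * r * b ≤ 4 * b ^ 2 by nlinarith) hx1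
        (sq_nonneg (Real.sin σ)) (show (0:ℝ) ≤ 4 * b ^ 2 by positivity)]
    have hD32le : vD b r σ ^ ((3:ℝ)/2) ≤ K * ε ^ 3 := by
      calc vD b r σ ^ ((3:ℝ)/2) ≤ ((1 + 4 * b ^ 2) * ε ^ 2) ^ ((3:ℝ)/2) :=
            Real.rpow_le_rpow (hDpos σ).le hDle (by norm_num)
        _ = K * ε ^ 3 := by
            rw [Real.mul_rpow (by positivity) (by positivity), sq_rpow_three_halves hε0.le]
    have h5 : b * ε / (K * ε ^ 3) ≤ b * ε / vD b r σ ^ ((3:ℝ)/2) := by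
      refine div_le_div_of_nonneg_left ?_ (hD32 σ) hD32le
      positivity
    have heq : b * ε / (K * ε ^ 3) = b / (K * ε ^ 2) := by
      field_simp
    have := le_trans (heq ▸ h5) (hFpt σ)
    linarith
  have h2 : (0:ℝ) ≤ ∫ σ in ε..(π/2), vF b r σ := by
    have hz : ∫ σ in ε..(π/2), (0:ℝ) = 0 := integral_zero
    rw [← hz]
    apply integral_mono_on hεπ intervalIntegrable_const (hFi ε (π/2))
    exact fun σ _ => hFpt0 σ
  have hsplit := integral_add_adjacent_intervals (hFi 0 ε) (hFi ε (π/2))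
  have hfinal : (b / K) / ε = b / (K * ε) := by rw [div_div]
  rw [hfinal, ← hsplit]
  linarith

lemma integrand_eq (rh₁ rh₂ κ r σ : ℝ) :
    rh₁ * (rh₁ - r * Real.cos (2 * σ)) /
        ((r - rh₁) ^ 2 + 4 * r * rh₁ * Real.sin σ ^ 2) ^ ((3:ℝ)/2)
      + κ * rh₂ * (rh₂ - r * Real.cos (2 * σ)) /
        ((r - rh₂) ^ 2 + 4 * r * rh₂ * Real.sin σ ^ 2) ^ ((3:ℝ)/2)
    = vF rh₁ r σ + κ * vF rh₂ r σ := by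
  simp only [vF, vD]; ring

set_option maxHeartbeats 1000000 in
/-- The function `Ξ` of (54) tends to `−∞` as `r → r̂₁⁺` and to `+∞` as `r → r̂₂⁻`. -/
theorem stmt11 (rh₁ rh₂ κ : ℝ) (h₁ : 0 < rh₁) (h₁₂ : rh₁ < rh₂) (hκ : 0 < κ) :
    Tendsto (fun r : ℝ => ∫ σ in (0:ℝ)..(π/2),
        (rh₁ * (rh₁ - r * Real.cos (2 * σ)) /
            ((r - rh₁) ^ 2 + 4 * r * rh₁ * Real.sin σ ^ 2) ^ ((3:ℝ)/2)
          + κ * rh₂ * (rh₂ - r * Real.cos (2 * σ)) /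
            ((r - rh₂) ^ 2 + 4 * r * rh₂ * Real.sin σ ^ 2) ^ ((3:ℝ)/2)))
      (𝓝[>] rh₁) atBot ∧
    Tendsto (fun r : ℝ => ∫ σ in (0:ℝ)..(π/2),
        (rh₁ * (rh₁ - r * Real.cos (2 * σ)) /
            ((r - rh₁) ^ 2 + 4 * r * rh₁ * Real.sin σ ^ 2) ^ ((3:ℝ)/2)
          + κ * rh₂ * (rh₂ - r * Real.cos (2 * σ)) /
            ((r - rh₂) ^ 2 + 4 * r * rh₂ * Real.sin σ ^ 2) ^ ((3:ℝ)/2)))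
      (𝓝[<] rh₂) atTop := by
  have h₂ : 0 < rh₂ := lt_trans h₁ h₁₂
  have hπ := Real.pi_gt_three
  simp only [integrand_eq]
  set d : ℝ := (rh₂ - rh₁) / 2 with hddef
  have hd0 : 0 < d := by rw [hddef]; linarith
  set δ : ℝ := min 1 d with hδdef
  have hδ0 : 0 < δ := lt_min one_pos hd0
  have hδ1 : δ ≤ 1 := min_le_left _ _
  have hδd : δ ≤ d := min_le_right _ _
  -- the integral splits for each relevant r
  have hsplit : ∀ r : ℝ, rh₁ < r → r < rh₂ →
      (∫ σ in (0:ℝ)..(π/2), (vF rh₁ r σ + κ * vF rh₂ r σ))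
        = (∫ σ in (0:ℝ)..(π/2), vF rh₁ r σ) + κ * ∫ σ in (0:ℝ)..(π/2), vF rh₂ r σ := by
    intro r hr1 hr2
    have hr0 : 0 < r := lt_trans h₁ hr1
    have hc1 := vF_cont h₁ hr0 (ne_of_gt hr1)
    have hc2 := vF_cont h₂ hr0 (ne_of_lt hr2)
    rw [integral_add (hc1.intervalIntegrable _ _)
      ((hc2.intervalIntegrable _ _).const_mul κ), intervalIntegral.integral_const_mul]
  constructor
  · -- r → rh₁⁺
    set A : ℝ := rh₁ / ((1 + 4 * rh₂ * rh₁) ^ ((3:ℝ)/2)) with hAdef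
    have hA0 : 0 < A := div_pos h₁ (Real.rpow_pos_of_pos (by positivity) _)
    set B : ℝ := 1/2 + π ^ 2 / (16 * rh₁) with hBdef
    set M : ℝ := rh₂ * (rh₂ + rh₂) / d ^ 3 with hMdef
    have hM0 : 0 ≤ M := by positivity
    set C : ℝ := κ * ((π/2) * M) with hCdef
    have hev : (fun r : ℝ => ∫ σ in (0:ℝ)..(π/2), (vF rh₁ r σ + κ * vF rh₂ r σ))
        ≤ᶠ[𝓝[>] rh₁] fun r => -A / (r - rh₁) + B / Real.sqrt (r - rh₁) + C := by
      filter_upwards [Ioo_mem_nhdsGT_of_mem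
        (show rh₁ ∈ Ico rh₁ (rh₁ + δ) from ⟨le_refl _, by linarith⟩)] with r hr
      have hr1 : rh₁ < r := hr.1
      have hrδ : r < rh₁ + δ := hr.2
      have hε1 : r - rh₁ < 1 := by linarith
      have hεd : r - rh₁ < d := by linarith
      have hr2 : r < rh₂ := by rw [hddef] at hεd; linarith
      have hr0 : 0 < r := lt_trans h₁ hr1
      have hdist : d ≤ rh₂ - r := by rw [hddef] at hεd ⊢; linarith
      have hI1 := ring_upper h₁ hr1 (le_of_lt hr2) hε1
      have hI2 : (∫ σ in (0:ℝ)..(π/2), vF rh₂ r σ) ≤ (π/2) * M := by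
        have hconst : ∫ σ in (0:ℝ)..(π/2), M = (π/2) * M := by
          rw [integral_const, smul_eq_mul]; ring
        rw [← hconst]
        apply integral_mono_on (by linarith) _ intervalIntegrable_const
        · intro σ _
          have := vF_abs_le (c := rh₂) (R := rh₂) (d := d) (r := r) σ h₂ hr0 (le_of_lt hr2)
            hd0 (by nlinarith)
          calc vF rh₂ r σ ≤ |vF rh₂ r σ| := le_abs_self _
            _ ≤ M := by rw [hMdef]; exact this
        · exact (vF_cont h₂ hr0 (ne_of_lt hr2)).intervalIntegrable _ _
      have hI2' : κ * (∫ σ in (0:ℝ)..(π/2), vF rh₂ r σ) ≤ C := by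
        rw [hCdef]; exact mul_le_mul_of_nonneg_left hI2 hκ.le
      rw [hsplit r hr1 hr2]
      calc (∫ σ in (0:ℝ)..(π/2), vF rh₁ r σ) + κ * ∫ σ in (0:ℝ)..(π/2), vF rh₂ r σ
          ≤ (-(rh₁ / ((1 + 4 * rh₂ * rh₁) ^ ((3:ℝ)/2))) / (r - rh₁)
              + (1/2 + π ^ 2 / (16 * rh₁)) / Real.sqrt (r - rh₁)) + C := by
            linarith
        _ = -A / (r - rh₁) + B / Real.sqrt (r - rh₁) + C := by
            rw [hAdef, hBdef]
    refine tendsto_atBot_mono' _ hev ?_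
    clear hev
    clear_value A B C M
    -- the bound tends to -∞
    have hmap : Tendsto (fun r : ℝ => r - rh₁) (𝓝[>] rh₁) (𝓝[>] 0) := by
      rw [tendsto_nhdsWithin_iff]
      constructor
      · have h : Tendsto (fun r : ℝ => r - rh₁) (𝓝 rh₁) (𝓝 0) := by
          simpa using (continuous_sub_right rh₁).tendsto rh₁
        exact h.mono_left nhdsWithin_le_nhds
      · filter_upwards [self_mem_nhdsWithin] with r hr
        exact sub_pos.mpr (mem_Ioi.mp hr)
    have hmap0 : Tendsto (fun r : ℝ => r - rh₁) (𝓝[>] rh₁) (𝓝 0) :=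
      hmap.mono_right nhdsWithin_le_nhds
    have hinv : Tendsto (fun r : ℝ => (r - rh₁)⁻¹) (𝓝[>] rh₁) atTop :=
      tendsto_inv_nhdsGT_zero.comp hmap
    have hsq : Tendsto (fun r : ℝ => Real.sqrt (r - rh₁)) (𝓝[>] rh₁) (𝓝 0) := by
      have := (Real.continuous_sqrt.tendsto 0).comp hmap0
      simpa [Function.comp_def] using this
    have hcoef : Tendsto (fun r : ℝ => -A + B * Real.sqrt (r - rh₁) + C * (r - rh₁))
        (𝓝[>] rh₁) (𝓝 (-A)) := by
      have h := (((tendsto_const_nhds :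
          Tendsto (fun _ : ℝ => -A) (𝓝[>] rh₁) (𝓝 (-A)))).add
        ((tendsto_const_nhds : Tendsto (fun _ : ℝ => B) (𝓝[>] rh₁) (𝓝 B)).mul hsq)).add
        ((tendsto_const_nhds : Tendsto (fun _ : ℝ => C) (𝓝[>] rh₁) (𝓝 C)).mul hmap0)
      simpa using h
    have hprod := hcoef.neg_mul_atTop (by linarith : -A < (0:ℝ)) hinv
    apply hprod.congr'
    filter_upwards [self_mem_nhdsWithin] with r hr
    have hε0 : 0 < r - rh₁ := sub_pos.mpr hr
    have hs0 : 0 < Real.sqrt (r - rh₁) := Real.sqrt_pos.mpr hε0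
    have hs2 : Real.sqrt (r - rh₁) * Real.sqrt (r - rh₁) = r - rh₁ :=
      Real.mul_self_sqrt hε0.le
    have hBs : B / Real.sqrt (r - rh₁) = B * Real.sqrt (r - rh₁) / (r - rh₁) := by
      rw [div_eq_div_iff hs0.ne' hε0.ne']
      linear_combination (-B) * hs2
    rw [hBs]
    field_simp
  · -- r → rh₂⁻
    set A : ℝ := rh₂ / ((1 + 4 * rh₂ ^ 2) ^ ((3:ℝ)/2)) with hAdef
    have hA0 : 0 < A := div_pos h₂ (Real.rpow_pos_of_pos (by positivity) _)
    set M : ℝ := rh₁ * (rh₁ + rh₂) / d ^ 3 with hMdef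
    have hM0 : 0 ≤ M := by positivity
    have hev : (fun r => A * κ * (rh₂ - r)⁻¹ - (π/2) * M)
        ≤ᶠ[𝓝[<] rh₂] fun r : ℝ => ∫ σ in (0:ℝ)..(π/2), (vF rh₁ r σ + κ * vF rh₂ r σ) := by
      filter_upwards [Ioo_mem_nhdsLT_of_mem
        (show rh₂ ∈ Ioc (rh₂ - δ) rh₂ from ⟨by linarith, le_refl _⟩)] with r hr
      have hr2 : r < rh₂ := hr.2
      have hrδ : rh₂ - δ < r := hr.1
      have hε1 : rh₂ - r < 1 := by linarith
      have hεd : rh₂ - r < d := by linarith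
      have hr1 : rh₁ < r := by rw [hddef] at hεd; linarith
      have hr0 : 0 < r := lt_trans h₁ hr1
      have hdist : d ≤ r - rh₁ := by rw [hddef] at hεd ⊢; linarith
      have hI2 := ring_lower h₂ hr0 hr2 hε1
      have hI1 : -((π/2) * M) ≤ ∫ σ in (0:ℝ)..(π/2), vF rh₁ r σ := by
        have hconst : ∫ σ in (0:ℝ)..(π/2), (-M) = -((π/2) * M) := by
          rw [integral_const, smul_eq_mul]; ring
        rw [← hconst]
        apply integral_mono_on (by linarith) intervalIntegrable_const
        · exact (vF_cont h₁ hr0 (ne_of_gt hr1)).intervalIntegrable _ _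
        · intro σ _
          have := vF_abs_le (c := rh₁) (R := rh₂) (d := d) (r := r) σ h₁ hr0 (le_of_lt hr2)
            hd0 (by nlinarith)
          have h2 := neg_abs_le (vF rh₁ r σ)
          rw [hMdef]
          linarith
      have hI2' : κ * ((rh₂ / ((1 + 4 * rh₂ ^ 2) ^ ((3:ℝ)/2))) / (rh₂ - r))
          ≤ κ * ∫ σ in (0:ℝ)..(π/2), vF rh₂ r σ :=
        mul_le_mul_of_nonneg_left hI2 hκ.le
      rw [hsplit r hr1 hr2]
      have heq : A * κ * (rh₂ - r)⁻¹
          = κ * ((rh₂ / ((1 + 4 * rh₂ ^ 2) ^ ((3:ℝ)/2))) / (rh₂ - r)) := by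
        rw [hAdef]; field_simp
      rw [heq]
      linarith
    refine tendsto_atTop_mono' _ hev ?_
    have hmap : Tendsto (fun r : ℝ => rh₂ - r) (𝓝[<] rh₂) (𝓝[>] 0) := by
      rw [tendsto_nhdsWithin_iff]
      constructor
      · have h : Tendsto (fun r : ℝ => rh₂ - r) (𝓝 rh₂) (𝓝 0) := by
          simpa using (continuous_sub_left rh₂).tendsto rh₂
        exact h.mono_left nhdsWithin_le_nhds
      · filter_upwards [self_mem_nhdsWithin] with r hr
        exact sub_pos.mpr (mem_Iio.mp hr)
    have hinv : Tendsto (fun r : ℝ => (rh₂ - r)⁻¹) (𝓝[<] rh₂) atTop :=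
      tendsto_inv_nhdsGT_zero.comp hmap
    have h1 : Tendsto (fun r : ℝ => A * κ * (rh₂ - r)⁻¹) (𝓝[<] rh₂) atTop :=
      hinv.const_mul_atTop (by positivity)
    exact tendsto_atTop_add_const_right _ _ h1
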